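/- In the graph G′ constructed below: if a node a ∈ V_1 does not lie on a k-cycle in G, then every directed path in G′ from the copy a ∈ S to the copy a′ ∈ T that avoids all of the nodes o_1, o_2, o_3, o_4 has total weight at least 8t. -/

import Mathlib

open scoped ENNReal

/-- Total weight of the walk that starts at `u` and then visits the vertices of `l` in
order.  Non-edges have weight `⊤`. -/
noncomputable def walkWeight {V : Type*} (w : V → V → ℝ≥0∞) : V → List V → ℝ≥0∞
  | _, [] => 0
  | u, x :: xs => w u x + walkWeight w x xs

/-- Shortest-path distance induced by the weight function `w` (`⊤` if there is no path). -/
noncomputable def netDist {V : Type*} (w : V → V → ℝ≥0∞) (u v : V) : ℝ≥0∞ :=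
  ⨅ (l : List V) (_ : (u :: l).getLast (List.cons_ne_nil u l) = v), walkWeight w u l

/-- Vertices of the graph `G'`: `A₁` will be `V₁` (for the two copies `S` and `T`),
`A₂` will be `V₂ ∪ ⋯ ∪ V_k` (for the two copies `fwd` and `bwd`), `gj` is the bit gadget
`J = {g_1, …, g_d}`, and `o1, …, o4` are the four omni-nodes. -/
inductive GVert (A₁ A₂ : Type) (d : ℕ) : Type
  | vS : A₁ → GVert A₁ A₂ d
  | vT : A₁ → GVert A₁ A₂ d
  | fwd : A₂ → GVert A₁ A₂ d
  | bwd : A₂ → GVert A₁ A₂ d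
  | gj : Fin d → GVert A₁ A₂ d
  | o1 : GVert A₁ A₂ d
  | o2 : GVert A₁ A₂ d
  | o3 : GVert A₁ A₂ d
  | o4 : GVert A₁ A₂ d

open Classical in
/-- Edge weights of `G'` (non-edges have weight `⊤`).  Here `part : A → ZMod k` gives the
part `V_{i+1}` of each vertex `i` of `G` (so `V₁ = {a | part a = 0}`), `E` is the edge
relation of `G`, `t` is the weight scale and `ident a` is the identifier `ā ∈ {0,1}^d`. -/
noncomputable def gw {A : Type} (k : ℕ) (part : A → ZMod k) (E : A → A → Prop)
    (d t : ℕ) (ident : A → Fin d → Bool) :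
    GVert {a : A // part a = 0} {x : A // part x ≠ 0} d →
      GVert {a : A // part a = 0} {x : A // part x ≠ 0} d → ℝ≥0∞
  -- edges of G inside V₂ ∪ ⋯ ∪ V_k, copied forwards and backwards
  | .fwd x, .fwd y => if E x.1 y.1 then 1 else ⊤
  | .bwd y, .bwd x => if E x.1 y.1 then 1 else ⊤
  -- edges of G leaving V₁
  | .vS a, .fwd x => if E a.1 x.1 then ((3 * t + 1 : ℕ) : ℝ≥0∞) else ⊤
  | .bwd x, .vS a => if E a.1 x.1 then 1 else ⊤
  -- edges of G entering V₁
  | .fwd x, .vT a => if E x.1 a.1 then ((3 * t + 1 : ℕ) : ℝ≥0∞) else ⊤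
  | .vT a, .bwd x => if E x.1 a.1 then 1 else ⊤
  -- omni-nodes to/from the fwd and bwd copies
  | .o1, .fwd _ => 1
  | .fwd _, .o2 => 1
  | .o3, .bwd _ => 1
  | .bwd _, .o4 => 1
  -- S to/from omni-nodes
  | .vS _, .o1 => ((5 * t + 1 : ℕ) : ℝ≥0∞)
  | .o2, .vS _ => ((t + 1 : ℕ) : ℝ≥0∞)
  | .vS _, .o3 => ((4 * t + 1 : ℕ) : ℝ≥0∞)
  | .o4, .vS _ => ((2 * t + 1 : ℕ) : ℝ≥0∞)
  -- T to/from omni-nodes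
  | .vT _, .o1 => ((t + 1 : ℕ) : ℝ≥0∞)
  | .o2, .vT _ => ((5 * t + 1 : ℕ) : ℝ≥0∞)
  | .vT _, .o3 => ((2 * t + 1 : ℕ) : ℝ≥0∞)
  | .o4, .vT _ => ((4 * t + 1 : ℕ) : ℝ≥0∞)
  -- weight-3t edges between distinct omni-nodes
  | .o1, .o2 => ((3 * t : ℕ) : ℝ≥0∞)
  | .o1, .o3 => ((3 * t : ℕ) : ℝ≥0∞)
  | .o1, .o4 => ((3 * t : ℕ) : ℝ≥0∞)
  | .o2, .o1 => ((3 * t : ℕ) : ℝ≥0∞)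
  | .o2, .o3 => ((3 * t : ℕ) : ℝ≥0∞)
  | .o2, .o4 => ((3 * t : ℕ) : ℝ≥0∞)
  | .o3, .o1 => ((3 * t : ℕ) : ℝ≥0∞)
  | .o3, .o2 => ((3 * t : ℕ) : ℝ≥0∞)
  | .o3, .o4 => ((3 * t : ℕ) : ℝ≥0∞)
  | .o4, .o1 => ((3 * t : ℕ) : ℝ≥0∞)
  | .o4, .o2 => ((3 * t : ℕ) : ℝ≥0∞)
  | .o4, .o3 => ((3 * t : ℕ) : ℝ≥0∞)
  -- the bit gadget: S to/from J
  | .vS a, .gj j => if ident a.1 j then ((3 * t + 1 : ℕ) : ℝ≥0∞) else ((5 * t + 1 : ℕ) : ℝ≥0∞)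
  | .gj j, .vS a => if ident a.1 j then ((2 * t + 1 : ℕ) : ℝ≥0∞) else 1
  -- the bit gadget: T to/from J
  | .gj j, .vT a => if ident a.1 j then ((5 * t + 1 : ℕ) : ℝ≥0∞) else ((3 * t + 1 : ℕ) : ℝ≥0∞)
  | .vT a, .gj j => if ident a.1 j then 1 else ((2 * t + 1 : ℕ) : ℝ≥0∞)
  -- weight-(3t+1) edges between J and the omni-nodes, in both directions
  | .gj _, .o1 => ((3 * t + 1 : ℕ) : ℝ≥0∞)
  | .gj _, .o2 => ((3 * t + 1 : ℕ) : ℝ≥0∞)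
  | .gj _, .o3 => ((3 * t + 1 : ℕ) : ℝ≥0∞)
  | .gj _, .o4 => ((3 * t + 1 : ℕ) : ℝ≥0∞)
  | .o1, .gj _ => ((3 * t + 1 : ℕ) : ℝ≥0∞)
  | .o2, .gj _ => ((3 * t + 1 : ℕ) : ℝ≥0∞)
  | .o3, .gj _ => ((3 * t + 1 : ℕ) : ℝ≥0∞)
  | .o4, .gj _ => ((3 * t + 1 : ℕ) : ℝ≥0∞)
  -- all remaining pairs: no edge
  | _, _ => ⊤

/-- `a ∈ V₁` lies on a `k`-cycle of `G`: there are `x₂ ∈ V₂, …, x_k ∈ V_k` with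
`(a,x₂), (x₂,x₃), …, (x_{k-1},x_k), (x_k,a)` all edges of `G`. -/
def liesOnKCycle {A : Type} (E : A → A → Prop) (k : ℕ) (a : A) : Prop :=
  ∃ x : ℕ → A, x 0 = a ∧ (∀ i, i < k - 1 → E (x i) (x (i + 1))) ∧ E (x (k - 1)) a

section Aux

/-- helper for casting arithmetic in `ℝ≥0∞`. -/
lemma enn_le_add {m n₁ n₂ : ℕ} (h : m ≤ n₁ + n₂) : (m : ℝ≥0∞) ≤ (n₁ : ℝ≥0∞) + (n₂ : ℝ≥0∞) := by
  rw [← Nat.cast_add]; exact Nat.cast_le.mpr h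

lemma enn_le_add_one {m n : ℕ} (h : m ≤ n + 1) : (m : ℝ≥0∞) ≤ (n : ℝ≥0∞) + 1 := by
  simpa using enn_le_add (n₂ := 1) h

/-- generic walk lower bound via a "potential" function. -/
lemma walk_lb {V : Type*} (w : V → V → ℝ≥0∞) (P : V → Prop) (D : V → ℝ≥0∞)
    (hinv : ∀ u v, P u → P v → D v ≤ D u + w u v) :
    ∀ (l : List V) (u : V), P u → (∀ x ∈ l, P x) →
      D ((u :: l).getLast (List.cons_ne_nil u l)) ≤ D u + walkWeight w u l := by
  intro l
  induction l with
  | nil => intro u _ _; simp [walkWeight]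
  | cons x xs ih =>
    intro u hu hl
    have hx : P x := hl x (by simp)
    have h2 := ih x hx (fun y hy => hl y (by simp [hy]))
    have h1 : D x ≤ D u + w u x := hinv u x hu hx
    have hgl : ((u :: x :: xs).getLast (List.cons_ne_nil u (x :: xs)))
        = ((x :: xs).getLast (List.cons_ne_nil x xs)) := by
      rw [List.getLast_cons (List.cons_ne_nil x xs)]
    rw [hgl]
    calc D ((x :: xs).getLast (List.cons_ne_nil x xs))
        ≤ D x + walkWeight w x xs := h2
      _ ≤ (D u + w u x) + walkWeight w x xs := add_le_add h1 le_rfl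
      _ = D u + walkWeight w u (x :: xs) := by rw [walkWeight, add_assoc]

/-- `Rchain part E a x`: there is a chain of `E`-edges from `a` to `x` all of whose
vertices after `a` lie outside `V₁`. -/
def Rchain {A : Type} {k : ℕ} (part : A → ZMod k) (E : A → A → Prop) (a x : A) : Prop :=
  Relation.TransGen (fun u v => E u v ∧ part v ≠ 0) a x

lemma chain_of_R {A : Type} {k : ℕ} (hk : 3 ≤ k) (part : A → ZMod k) (E : A → A → Prop)
    (hE : ∀ u v, E u v → part v = part u + 1) (a : A) (ha : part a = 0)
    {x : A} (hx : Rchain part E a x) :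
    part x ≠ 0 ∧ ∃ c : ℕ → A, c 0 = a ∧ c ((part x).val) = x ∧
      ∀ i < (part x).val, E (c i) (c (i + 1)) := by
  haveI : NeZero k := ⟨by omega⟩
  haveI : Fact (1 < k) := ⟨by omega⟩
  induction hx with
  | @single y h =>
    rcases h with ⟨hEax, hx0⟩
    have hpy : part y = 1 := by rw [hE a y hEax, ha, zero_add]
    have hvy : (part y).val = 1 := by rw [hpy, ZMod.val_one]
    refine ⟨hx0, fun i => if i = 0 then a else y, if_pos rfl, ?_, ?_⟩
    · rw [hvy]
      show (if (1 : ℕ) = 0 then a else y) = y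
      rw [if_neg one_ne_zero]
    · rw [hvy]
      intro i hi
      interval_cases i
      show E (if (0:ℕ) = 0 then a else y) (if (1:ℕ) = 0 then a else y)
      rw [if_pos rfl, if_neg one_ne_zero]
      exact hEax
  | @tail b y hab hby ih =>
    rcases hby with ⟨hEby, hy0⟩
    rcases ih with ⟨hb0, c, hc0, hcb, hcE⟩
    have hvb_lt : (part b).val < k := ZMod.val_lt _
    have hvb_ne : (part b).val ≠ 0 := fun hv => hb0 ((ZMod.val_eq_zero (part b)).mp hv)
    have hvy : (part y).val = ((part b).val + 1) % k := by
      rw [hE b y hEby, ZMod.val_add, ZMod.val_one]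
    have hvy_ne : (part y).val ≠ 0 := fun hv => hy0 ((ZMod.val_eq_zero (part y)).mp hv)
    have hvy' : (part y).val = (part b).val + 1 := by
      rcases Nat.lt_or_ge ((part b).val + 1) k with h | h
      · rw [hvy, Nat.mod_eq_of_lt h]
      · exfalso; apply hvy_ne
        have hkk : (part b).val + 1 = k := by omega
        rw [hvy, hkk, Nat.mod_self]
    refine ⟨hy0, fun i => if i = (part b).val + 1 then y else c i, ?_, ?_, ?_⟩
    · show (if (0:ℕ) = (part b).val + 1 then y else c 0) = a
      rw [if_neg (by omega)]; exact hc0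
    · rw [hvy']
      show (if (part b).val + 1 = (part b).val + 1 then y else c _) = y
      rw [if_pos rfl]
    · intro i hi
      rw [hvy'] at hi
      show E (if i = (part b).val + 1 then y else c i)
        (if i + 1 = (part b).val + 1 then y else c (i + 1))
      rcases Nat.lt_or_ge i (part b).val with h | h
      · rw [if_neg (by omega), if_neg (by omega)]
        exact hcE i h
      · have hib : i = (part b).val := by omega
        subst hib
        rw [if_neg (by omega), if_pos rfl, hcb]
        exact hEby

lemma cycle_of_R {A : Type} {k : ℕ} (hk : 3 ≤ k) (part : A → ZMod k) (E : A → A → Prop)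
    (hE : ∀ u v, E u v → part v = part u + 1) (a : A) (ha : part a = 0)
    {x : A} (hx : Rchain part E a x) (hxa : E x a) : liesOnKCycle E k a := by
  haveI : NeZero k := ⟨by omega⟩
  haveI : Fact (1 < k) := ⟨by omega⟩
  obtain ⟨hx0, c, hc0, hcx, hcE⟩ := chain_of_R hk part E hE a ha hx
  have h1 : part x + 1 = 0 := by rw [← hE x a hxa, ha]
  have h2 : ((part x).val + 1) % k = 0 := by
    have h3 := congrArg ZMod.val h1
    rwa [ZMod.val_add, ZMod.val_one, ZMod.val_zero] at h3
  have hvlt : (part x).val < k := ZMod.val_lt _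
  have hval : (part x).val = k - 1 := by
    rcases Nat.lt_or_ge ((part x).val + 1) k with h | h
    · rw [Nat.mod_eq_of_lt h] at h2; omega
    · omega
  rw [hval] at hcx hcE
  exact ⟨c, hc0, hcE, by rw [hcx]; exact hxa⟩

end Aux

open Classical in
/-- The potential function used to lower-bound walks from `vS a` to `vT a`. -/
noncomputable def Dpot {A : Type} (k : ℕ) (part : A → ZMod k) (E : A → A → Prop)
    (d t : ℕ) (ident : A → Fin d → Bool) (a : A) :
    GVert {b : A // part b = 0} {x : A // part x ≠ 0} d → ℝ≥0∞
  | .vS b => if b.1 = a then 0 else ((3 * t + 2 : ℕ) : ℝ≥0∞)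
  | .vT c => if c.1 = a then ((8 * t : ℕ) : ℝ≥0∞) else ((6 * t + 2 : ℕ) : ℝ≥0∞)
  | .fwd x => if Rchain part E a x.1 then ((3 * t + (part x.1).val : ℕ) : ℝ≥0∞)
              else ((6 * t + 3 : ℕ) : ℝ≥0∞)
  | .bwd _ => ((3 * t + 1 : ℕ) : ℝ≥0∞)
  | .gj j => if ident a j then ((3 * t + 1 : ℕ) : ℝ≥0∞) else ((5 * t + 1 : ℕ) : ℝ≥0∞)
  | _ => 0

set_option maxHeartbeats 12000000 in
lemma Dpot_inv {A : Type} (k t : ℕ) (hk : 3 ≤ k) (ht : 2 * k < t)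
    (part : A → ZMod k) (E : A → A → Prop)
    (hE : ∀ u v : A, E u v → part v = part u + 1)
    (d : ℕ) (ident : A → Fin d → Bool)
    (a : A) (ha : part a = 0) (hno : ¬ liesOnKCycle E k a)
    (u v : GVert {b : A // part b = 0} {x : A // part x ≠ 0} d)
    (hu : ¬(u = GVert.o1 ∨ u = GVert.o2 ∨ u = GVert.o3 ∨ u = GVert.o4))
    (hv : ¬(v = GVert.o1 ∨ v = GVert.o2 ∨ v = GVert.o3 ∨ v = GVert.o4)) :
    Dpot k part E d t ident a v ≤ Dpot k part E d t ident a u + gw k part E d t ident u v := by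
  haveI : NeZero k := ⟨by omega⟩
  haveI : Fact (1 < k) := ⟨by omega⟩
  cases u with
  | o1 => exact absurd (Or.inl rfl) hu
  | o2 => exact absurd (Or.inr (Or.inl rfl)) hu
  | o3 => exact absurd (Or.inr (Or.inr (Or.inl rfl))) hu
  | o4 => exact absurd (Or.inr (Or.inr (Or.inr rfl))) hu
  | vS b =>
    cases v with
    | o1 => exact absurd (Or.inl rfl) hv
    | o2 => exact absurd (Or.inr (Or.inl rfl)) hv
    | o3 => exact absurd (Or.inr (Or.inr (Or.inl rfl))) hv
    | o4 => exact absurd (Or.inr (Or.inr (Or.inr rfl))) hv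
    | vS b' => simp only [gw, add_top]; exact le_top
    | vT c => simp only [gw, add_top]; exact le_top
    | bwd x => simp only [gw, add_top]; exact le_top
    | fwd x =>
      simp only [Dpot, gw]
      by_cases hEbx : E b.1 x.1
      · rw [if_pos hEbx]
        have hvx := ZMod.val_lt (part x.1)
        by_cases hba : b.1 = a
        · rw [if_pos hba, zero_add]
          have hEax : E a x.1 := hba ▸ hEbx
          have hRx : Rchain part E a x.1 := Relation.TransGen.single ⟨hEax, x.2⟩
          rw [if_pos hRx]
          have hp1 : part x.1 = 1 := by rw [hE _ _ hEax, ha, zero_add]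
          have hv1 : (part x.1).val = 1 := by rw [hp1, ZMod.val_one]
          exact Nat.cast_le.mpr (by omega)
        · rw [if_neg hba]
          split_ifs <;> apply enn_le_add <;> omega
      · rw [if_neg hEbx, add_top]; exact le_top
    | gj j =>
      simp only [Dpot, gw]
      by_cases hba : b.1 = a
      · rw [if_pos hba, hba, zero_add]
      · rw [if_neg hba]
        split_ifs <;> apply enn_le_add <;> omega
  | vT c =>
    cases v with
    | o1 => exact absurd (Or.inl rfl) hv
    | o2 => exact absurd (Or.inr (Or.inl rfl)) hv
    | o3 => exact absurd (Or.inr (Or.inr (Or.inl rfl))) hv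
    | o4 => exact absurd (Or.inr (Or.inr (Or.inr rfl))) hv
    | vS b => simp only [gw, add_top]; exact le_top
    | vT c' => simp only [gw, add_top]; exact le_top
    | fwd x => simp only [gw, add_top]; exact le_top
    | bwd x =>
      simp only [Dpot, gw]
      split_ifs <;>
        first
          | (rw [add_top]; exact le_top)
          | (apply enn_le_add_one; omega)
    | gj j =>
      simp only [Dpot, gw]
      split_ifs <;>
        first
          | (apply enn_le_add_one; omega)
          | (apply enn_le_add; omega)
  | fwd x =>
    cases v with
    | o1 => exact absurd (Or.inl rfl) hv
    | o2 => exact absurd (Or.inr (Or.inl rfl)) hv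
    | o3 => exact absurd (Or.inr (Or.inr (Or.inl rfl))) hv
    | o4 => exact absurd (Or.inr (Or.inr (Or.inr rfl))) hv
    | vS b => simp only [gw, add_top]; exact le_top
    | bwd y => simp only [gw, add_top]; exact le_top
    | gj j => simp only [gw, add_top]; exact le_top
    | fwd y =>
      simp only [Dpot, gw]
      by_cases hExy : E x.1 y.1
      · rw [if_pos hExy]
        have hvx := ZMod.val_lt (part x.1)
        have hvy := ZMod.val_lt (part y.1)
        by_cases hRx : Rchain part E a x.1
        · have hRy : Rchain part E a y.1 := hRx.tail ⟨hExy, y.2⟩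
          rw [if_pos hRx, if_pos hRy]
          have h1 : (part y.1).val = ((part x.1).val + 1) % k := by
            rw [hE _ _ hExy, ZMod.val_add, ZMod.val_one]
          have h2 : (part y.1).val ≠ 0 := fun hv => y.2 ((ZMod.val_eq_zero _).mp hv)
          have h3 : (part y.1).val = (part x.1).val + 1 := by
            rcases Nat.lt_or_ge ((part x.1).val + 1) k with h | h
            · rw [h1, Nat.mod_eq_of_lt h]
            · exfalso; apply h2
              have hkk : (part x.1).val + 1 = k := by omega
              rw [h1, hkk, Nat.mod_self]
          apply enn_le_add_one; omega
        · rw [if_neg hRx]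
          split_ifs <;> apply enn_le_add_one <;> omega
      · rw [if_neg hExy, add_top]; exact le_top
    | vT c =>
      simp only [Dpot, gw]
      by_cases hExc : E x.1 c.1
      · rw [if_pos hExc]
        have hvx := ZMod.val_lt (part x.1)
        have hvx0 : (part x.1).val ≠ 0 := fun hv => x.2 ((ZMod.val_eq_zero _).mp hv)
        by_cases hca : c.1 = a
        · rw [if_pos hca]
          have hRx : ¬ Rchain part E a x.1 :=
            fun hR => hno (cycle_of_R hk part E hE a ha hR (hca ▸ hExc))
          rw [if_neg hRx]
          apply enn_le_add; omega
        · rw [if_neg hca]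
          split_ifs <;> apply enn_le_add <;> omega
      · rw [if_neg hExc, add_top]; exact le_top
  | bwd x =>
    cases v with
    | o1 => exact absurd (Or.inl rfl) hv
    | o2 => exact absurd (Or.inr (Or.inl rfl)) hv
    | o3 => exact absurd (Or.inr (Or.inr (Or.inl rfl))) hv
    | o4 => exact absurd (Or.inr (Or.inr (Or.inr rfl))) hv
    | vT c => simp only [gw, add_top]; exact le_top
    | fwd y => simp only [gw, add_top]; exact le_top
    | gj j => simp only [gw, add_top]; exact le_top
    | bwd y =>
      simp only [Dpot, gw]
      split_ifs <;>
        first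
          | (rw [add_top]; exact le_top)
          | (apply enn_le_add_one; omega)
    | vS b =>
      simp only [Dpot, gw]
      split_ifs <;>
        first
          | (rw [add_top]; exact le_top)
          | positivity
          | (apply enn_le_add_one; omega)
  | gj j =>
    cases v with
    | o1 => exact absurd (Or.inl rfl) hv
    | o2 => exact absurd (Or.inr (Or.inl rfl)) hv
    | o3 => exact absurd (Or.inr (Or.inr (Or.inl rfl))) hv
    | o4 => exact absurd (Or.inr (Or.inr (Or.inr rfl))) hv
    | fwd y => simp only [gw, add_top]; exact le_top
    | bwd y => simp only [gw, add_top]; exact le_top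
    | gj j' => simp only [gw, add_top]; exact le_top
    | vS b =>
      simp only [Dpot, gw]
      split_ifs <;>
        first
          | positivity
          | (apply enn_le_add_one; omega)
          | (apply enn_le_add; omega)
    | vT c =>
      simp only [Dpot, gw]
      by_cases hca : c.1 = a
      · rw [if_pos hca, hca]
        split_ifs <;> apply enn_le_add <;> omega
      · rw [if_neg hca]
        split_ifs <;> apply enn_le_add <;> omega
/-- If `a ∈ V₁` does not lie on a `k`-cycle of `G`, then every
directed path (walk) in `G′` from the copy `a ∈ S` to the copy `a′ ∈ T` that avoids all of
`o₁, o₂, o₃, o₄` has total weight at least `8t`. -/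
theorem stmt_15 {A : Type} (k t : ℕ) (hk : 3 ≤ k) (ht : 2 * k < t)
    (part : A → ZMod k) (E : A → A → Prop)
    (hE : ∀ u v : A, E u v → part v = part u + 1)
    (d : ℕ) (ident : A → Fin d → Bool)
    (hid₁ : ∀ a b : A, part a = 0 → part b = 0 → a ≠ b →
      (∃ i : Fin d, ident a i = true ∧ ident b i = false) ∧
      (∃ j : Fin d, ident a j = false ∧ ident b j = true))
    (hid₂ : ∀ a b : A, part a = 0 → part b = 0 →
      (∃ i : Fin d, ident a i = true ∧ ident b i = true) ∧
      (∃ j : Fin d, ident a j = false ∧ ident b j = false))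
    (a : A) (ha : part a = 0) (hno : ¬ liesOnKCycle E k a)
    (l : List (GVert {b : A // part b = 0} {x : A // part x ≠ 0} d))
    (hlast : (GVert.vS ⟨a, ha⟩ :: l).getLast (List.cons_ne_nil _ _) = GVert.vT ⟨a, ha⟩)
    (havoid : ∀ x ∈ GVert.vS ⟨a, ha⟩ :: l,
      ¬(x = GVert.o1 ∨ x = GVert.o2 ∨ x = GVert.o3 ∨ x = GVert.o4)) :
    ((8 * t : ℕ) : ℝ≥0∞) ≤ walkWeight (gw k part E d t ident) (GVert.vS ⟨a, ha⟩) l := by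
  have key := walk_lb (gw k part E d t ident)
    (fun x => ¬(x = GVert.o1 ∨ x = GVert.o2 ∨ x = GVert.o3 ∨ x = GVert.o4))
    (Dpot k part E d t ident a)
    (fun u v hu hv => Dpot_inv k t hk ht part E hE d ident a ha hno u v hu hv)
    l (GVert.vS ⟨a, ha⟩) (havoid _ (by simp)) (fun x hx => havoid x (by simp [hx]))
  rw [hlast] at key
  have h1 : Dpot k part E d t ident a (GVert.vT ⟨a, ha⟩) = ((8 * t : ℕ) : ℝ≥0∞) := by
    simp [Dpot]
  have h2 : Dpot k part E d t ident a (GVert.vS ⟨a, ha⟩) = 0 := by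
    simp [Dpot]
  rw [h1, h2, zero_add] at key
  exact key
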